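/- arXiv:1910.03798 — 3 statements merged into one kernel-verified Lean document; each statement's English description precedes it below -/
import Mathlib

section
/- Let p_1, ..., p_n be real numbers in [0,1) such that the product of (1-p_i) over i = 1..n equals 1/e. Then the probability that exactly one of n independent Bernoulli random variables X_i (with success probabilities p_i) equals 1, namely the sum over j of p_j · ∏_{i≠j}(1-p_i), is at least 1/e. -/
theorem stmt1 (n : ℕ) (p : Fin n → ℝ)
    (h0 : ∀ i, 0 ≤ p i) (h1 : ∀ i, p i < 1)
    (hprod : ∏ i, (1 - p i) = 1 / Real.exp 1) :
    1 / Real.exp 1 ≤ ∑ j, p j * ∏ i ∈ Finset.univ.erase j, (1 - p i) := by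
  have hpos : ∀ i, (0:ℝ) < 1 - p i := fun i => by linarith [h1 i]
  have hP : (0:ℝ) < 1 / Real.exp 1 := by positivity
  have key : ∀ j : Fin n, p j * ∏ i ∈ Finset.univ.erase j, (1 - p i)
      = p j / (1 - p j) * ∏ i, (1 - p i) := by
    intro j
    rw [← Finset.mul_prod_erase Finset.univ _ (Finset.mem_univ j)]
    have := (hpos j).ne'
    field_simp
  have hlog : ∀ j, -Real.log (1 - p j) ≤ p j / (1 - p j) := by
    intro j
    have h := hpos j
    have hle := Real.log_le_sub_one_of_pos (x := 1/(1 - p j)) (by positivity)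
    rw [Real.log_div one_ne_zero h.ne', Real.log_one] at hle
    have : (1:ℝ)/(1 - p j) - 1 = p j / (1 - p j) := by field_simp; ring
    linarith
  have hsumlog : ∑ j, -Real.log (1 - p j) = 1 := by
    rw [Finset.sum_neg_distrib, ← Real.log_prod (fun i _ => (hpos i).ne'),
      hprod, Real.log_div one_ne_zero (Real.exp_ne_zero 1), Real.log_one,
      Real.log_exp]
    ring
  calc 1 / Real.exp 1 = (∑ j, -Real.log (1 - p j)) * (1 / Real.exp 1) := by
        rw [hsumlog, one_mul]
    _ = ∑ j, (-Real.log (1 - p j)) * (1 / Real.exp 1) := by rw [Finset.sum_mul]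
    _ ≤ ∑ j, p j / (1 - p j) * (1 / Real.exp 1) :=
        Finset.sum_le_sum fun j _ => mul_le_mul_of_nonneg_right (hlog j) hP.le
    _ = ∑ j, p j * ∏ i ∈ Finset.univ.erase j, (1 - p i) := by
        rw [← hprod]
        exact Finset.sum_congr rfl fun j _ => (key j).symm
end

section
/- For any integers 1 ≤ i ≤ n, we have (1/n) + ((i-1)/n) · ∑_{j=i+1}^{n} 1/(j-1) ≤ 2/n + (1/e), where the bound follows because α·ln(1/α) ≤ 1/e for all α ∈ (0,1]. -/
lemma harm_bound (i : ℕ) (hi : 2 ≤ i) :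
    ∀ n, i ≤ n → ∑ j ∈ Finset.Ioc i n, 1 / ((j : ℝ) - 1)
      ≤ Real.log ((n : ℝ) - 1) - Real.log ((i : ℝ) - 1) := by
  intro n
  induction n with
  | zero => intro h; omega
  | succ m ih =>
    intro h
    rcases Nat.lt_or_ge i (m + 1) with hlt | hge
    · have hm : i ≤ m := by omega
      rw [Finset.sum_Ioc_succ_top hm]
      have key : 1 / ((m : ℝ) + 1 - 1) ≤ Real.log ((m : ℝ) + 1 - 1) - Real.log ((m : ℝ) - 1) := by
        have hm2 : (2 : ℝ) ≤ (m : ℝ) := by exact_mod_cast le_trans hi hm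
        have hmpos : (0 : ℝ) < (m : ℝ) := by linarith
        have hm1pos : (0 : ℝ) < (m : ℝ) - 1 := by linarith
        have hlog := Real.log_le_sub_one_of_pos (x := ((m : ℝ) - 1) / m)
          (by positivity)
        rw [Real.log_div (by linarith) (by linarith)] at hlog
        have : ((m : ℝ) - 1) / m - 1 = -(1 / m) := by field_simp; ring
        rw [this] at hlog
        have : (m : ℝ) + 1 - 1 = (m : ℝ) := by ring
        rw [this]
        linarith
      push_cast
      have := ih hm
      push_cast at this
      linarith
    · have : i = m + 1 := by omega
      subst this
      simp
theorem stmt5 (n i : ℕ) (h1 : 1 ≤ i) (h2 : i ≤ n) :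
    (1 : ℝ) / n + (((i : ℝ) - 1) / n) * ∑ j ∈ Finset.Ioc i n, 1 / ((j : ℝ) - 1)
      ≤ 2 / n + 1 / Real.exp 1 := by
  have hn : (1 : ℝ) ≤ (n : ℝ) := by exact_mod_cast le_trans h1 h2
  have hnpos : (0 : ℝ) < n := by linarith
  have hexp : (0 : ℝ) < Real.exp 1 := Real.exp_pos 1
  rcases Nat.lt_or_ge i 2 with hi1 | hi2
  · have : i = 1 := by omega
    subst this
    simp only [Nat.cast_one, sub_self, zero_div, zero_mul, add_zero]
    have : (1 : ℝ) / n ≤ 2 / n := by gcongr <;> norm_num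
    have h0 : (0 : ℝ) ≤ 1 / Real.exp 1 := by positivity
    linarith
  · set α : ℝ := ((i : ℝ) - 1) / n with hα
    have hi2R : (2 : ℝ) ≤ (i : ℝ) := by exact_mod_cast hi2
    have hi1pos : (0 : ℝ) < (i : ℝ) - 1 := by linarith
    have hαpos : 0 < α := by positivity
    have hS := harm_bound i hi2 n h2
    have hlogn : Real.log ((n : ℝ) - 1) ≤ Real.log (n : ℝ) := by
      rcases eq_or_lt_of_le hn with h | h
      · rw [← h]; norm_num
      · exact Real.log_le_log (by linarith) (by linarith)
    have hS2 : ∑ j ∈ Finset.Ioc i n, 1 / ((j : ℝ) - 1)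
        ≤ Real.log (1 / α) := by
      have : Real.log (1 / α) = Real.log (n : ℝ) - Real.log ((i : ℝ) - 1) := by
        rw [hα, one_div, Real.log_inv, Real.log_div (by linarith) (by linarith)]
        ring
      rw [this]
      linarith
    have hkey : α * Real.log (1 / α) ≤ 1 / Real.exp 1 := by
      have hlog := Real.log_le_sub_one_of_pos (x := 1 / (Real.exp 1 * α)) (by positivity)
      have heq : Real.log (1 / α) = 1 + Real.log (1 / (Real.exp 1 * α)) := by
        rw [one_div, one_div, Real.log_inv, Real.log_inv, Real.log_mul (by positivity) (by positivity),
          Real.log_exp]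
        ring
      have : α * Real.log (1 / α) ≤ α * (1 / (Real.exp 1 * α)) := by
        apply mul_le_mul_of_nonneg_left _ hαpos.le
        rw [heq]; linarith
      have heq2 : α * (1 / (Real.exp 1 * α)) = 1 / Real.exp 1 := by
        field_simp
      linarith
    have hle : α * ∑ j ∈ Finset.Ioc i n, 1 / ((j : ℝ) - 1) ≤ α * Real.log (1 / α) :=
      mul_le_mul_of_nonneg_left hS2 hαpos.le
    have h1n : (1 : ℝ) / n ≤ 2 / n := by gcongr <;> norm_num
    linarith
end

section
/- Let χ_1, ..., χ_m be independent Bernoulli (i.e., {0,1}-valued) random variables. Then P[∑_{i=1}^m χ_i ≥ 2] ≤ (P[∃ i, χ_i = 1])². -/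
open MeasureTheory ProbabilityTheory

theorem stmt7 {Ω : Type*} [MeasurableSpace Ω] (μ : Measure Ω) [IsProbabilityMeasure μ]
    (m : ℕ) (χ : Fin m → Ω → ℕ)
    (hmeas : ∀ i, Measurable (χ i))
    (hval : ∀ i ω, χ i ω = 0 ∨ χ i ω = 1)
    (hindep : iIndepFun χ μ) :
    μ {ω | 2 ≤ ∑ i, χ i ω} ≤ (μ {ω | ∃ i, χ i ω = 1}) ^ 2 := by
  classical
  set E : Set Ω := {ω | ∃ i, χ i ω = 1} with hE
  set A : Fin m → Set Ω := fun i => {ω | χ i ω = 1 ∧ ∀ j, j < i → χ j ω = 0} with hA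
  set B : Fin m → Set Ω := fun i => {ω | ∃ j, i < j ∧ χ j ω = 1} with hB
  -- measurability
  have hAmeas : ∀ i, MeasurableSet (A i) := by
    intro i
    have : A i = (χ i ⁻¹' {1}) ∩ ⋂ j : Fin m, ⋂ _ : j < i, χ j ⁻¹' {0} := by
      ext ω; simp [hA, Set.mem_iInter]
    rw [this]
    exact ((hmeas i) (measurableSet_singleton 1)).inter
      (MeasurableSet.iInter fun j => MeasurableSet.iInter fun _ =>
        (hmeas j) (measurableSet_singleton 0))
  have hBmeas : ∀ i, MeasurableSet (B i) := by
    intro i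
    have : B i = ⋃ j : Fin m, ⋃ _ : i < j, χ j ⁻¹' {1} := by
      ext ω; simp [hB]
    rw [this]
    exact MeasurableSet.iUnion fun j => MeasurableSet.iUnion fun _ =>
      (hmeas j) (measurableSet_singleton 1)
  -- Step 1 : inclusion
  have hsub : {ω | 2 ≤ ∑ i, χ i ω} ⊆ ⋃ i, A i ∩ B i := by
    intro ω hω
    set T : Finset (Fin m) := Finset.univ.filter (fun i => χ i ω = 1) with hT
    have hsum : ∑ i, χ i ω = T.card := by
      rw [Finset.card_filter]
      apply Finset.sum_congr rfl
      intro i _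
      rcases hval i ω with h | h <;> simp [h]
    have hcard : 2 ≤ T.card := by rw [← hsum]; exact hω
    have hne : T.Nonempty := Finset.card_pos.mp (by omega)
    set i0 := T.min' hne with hi0
    have hi0T : i0 ∈ T := T.min'_mem hne
    have hi0one : χ i0 ω = 1 := (Finset.mem_filter.mp hi0T).2
    obtain ⟨j, hjT, hji⟩ : ∃ j ∈ T, j ≠ i0 := by
      by_contra h
      push_neg at h
      have : T ⊆ {i0} := fun x hx => Finset.mem_singleton.mpr (h x hx)
      have := Finset.card_le_card this
      simp at this; omega
    have hji0 : i0 < j := lt_of_le_of_ne (T.min'_le j hjT) (Ne.symm hji)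
    refine Set.mem_iUnion.mpr ⟨i0, ⟨hi0one, ?_⟩, ⟨j, hji0, (Finset.mem_filter.mp hjT).2⟩⟩
    intro k hk
    rcases hval k ω with h | h
    · exact h
    · exfalso
      have : k ∈ T := Finset.mem_filter.mpr ⟨Finset.mem_univ _, h⟩
      exact absurd (T.min'_le k this) (not_le.mpr hk)
  -- Step 3 : independence
  have hprod : ∀ i, μ (A i ∩ B i) = μ (A i) * μ (B i) := by
    intro i
    set S : Finset (Fin m) := Finset.univ.filter (fun j => j ≤ i) with hS
    set T : Finset (Fin m) := Finset.univ.filter (fun j => i < j) with hT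
    have hST : Disjoint S T := by
      rw [Finset.disjoint_left]
      intro a ha ha'
      simp [hS, hT] at ha ha'
      exact absurd ha' (not_lt.mpr ha)
    have hindep2 := hindep.indepFun_finset S T hST hmeas
    have hiS : i ∈ S := by simp [hS]
    set sA : Set ((j : S) → ℕ) := {v | v ⟨i, hiS⟩ = 1 ∧ ∀ j : S, (j : Fin m) < i → v j = 0}
      with hsA
    set sB : Set ((j : T) → ℕ) := {v | ∃ j : T, v j = 1} with hsB
    have hsAmeas : MeasurableSet sA := by
      have : sA = ((fun v : (j : S) → ℕ => v ⟨i, hiS⟩) ⁻¹' {1}) ∩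
          ⋂ j : S, ⋂ _ : (j : Fin m) < i, (fun v : (j : S) → ℕ => v j) ⁻¹' {0} := by
        ext v; simp [hsA, Set.mem_iInter]
      rw [this]
      exact ((measurable_pi_apply _) (measurableSet_singleton 1)).inter
        (MeasurableSet.iInter fun j => MeasurableSet.iInter fun _ =>
          (measurable_pi_apply _) (measurableSet_singleton 0))
    have hsBmeas : MeasurableSet sB := by
      have : sB = ⋃ j : T, (fun v : (j : T) → ℕ => v j) ⁻¹' {1} := by
        ext v; simp [hsB]
      rw [this]
      exact MeasurableSet.iUnion fun j => (measurable_pi_apply _) (measurableSet_singleton 1)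
    have hApre : A i = (fun a (j : S) => χ j a) ⁻¹' sA := by
      ext ω
      simp only [hA, hsA, Set.mem_preimage, Set.mem_setOf_eq]
      constructor
      · rintro ⟨h1, h2⟩
        exact ⟨h1, fun j hj => h2 j hj⟩
      · rintro ⟨h1, h2⟩
        refine ⟨h1, fun j hj => h2 ⟨j, by simp [hS]; exact le_of_lt hj⟩ hj⟩
    have hBpre : B i = (fun a (j : T) => χ j a) ⁻¹' sB := by
      ext ω
      simp only [hB, hsB, Set.mem_preimage, Set.mem_setOf_eq]
      constructor
      · rintro ⟨j, hj, h1⟩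
        exact ⟨⟨j, by simp [hT, hj]⟩, h1⟩
      · rintro ⟨⟨j, hj⟩, h1⟩
        simp [hT] at hj
        exact ⟨j, hj, h1⟩
    rw [hApre, hBpre]
    exact hindep2.measure_inter_preimage_eq_mul _ _ hsAmeas hsBmeas
  -- disjointness of A
  have hdisj' : ∀ i j : Fin m, i < j → Disjoint (A i) (A j) := by
    intro i j h
    rw [Set.disjoint_left]
    rintro ω ⟨hi1, _⟩ ⟨_, hj2⟩
    have := hj2 i h
    omega
  have hdisj : Pairwise (Function.onFun Disjoint A) := by
    intro i j hij
    rcases lt_or_gt_of_ne hij with h | h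
    · exact hdisj' i j h
    · exact (hdisj' j i h).symm
  have hAsum : ∑ i, μ (A i) ≤ μ E := by
    have h1 : ∑ i, μ (A i) = μ (⋃ i, A i) := by
      rw [measure_iUnion hdisj hAmeas, tsum_fintype]
    rw [h1]
    apply measure_mono
    rintro ω ⟨_, ⟨i, rfl⟩, hi1, -⟩
    exact ⟨i, hi1⟩
  have hBle : ∀ i, μ (B i) ≤ μ E := by
    intro i
    apply measure_mono
    rintro ω ⟨j, _, hj⟩
    exact ⟨j, hj⟩
  calc μ {ω | 2 ≤ ∑ i, χ i ω} ≤ μ (⋃ i, A i ∩ B i) := measure_mono hsub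
    _ ≤ ∑' i, μ (A i ∩ B i) := measure_iUnion_le _
    _ = ∑ i, μ (A i ∩ B i) := tsum_fintype _
    _ ≤ ∑ i, μ (A i) * μ E := by
        apply Finset.sum_le_sum
        intro i _
        rw [hprod i]
        exact mul_le_mul_right (hBle i) _
    _ = (∑ i, μ (A i)) * μ E := by rw [Finset.sum_mul]
    _ ≤ μ E * μ E := mul_le_mul_left hAsum _
    _ = μ E ^ 2 := (sq (μ E)).symm
end
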